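/- (λ-maximum lemma.) For every δ > 0 there exists λ > 0, depending only on δ, with the following property: for every metric space X and every point P ∈ X such that the closed ball of radius δ about P is complete, and for every locally bounded function f : X → (0,∞) with f(P) ≥ 1, there exists a point Q in the open ball B(P, δ) such that f(Q) ≥ f(P) and such that for every Q′ ∈ B(Q, ε) one has f(Q′) ≤ λ·f(Q), where ε := λ^{−1}·f(Q)^{−1/2}. -/
import Mathlib


/-- λ-maximum lemma: for every `δ > 0` there exists `λ > 0`, depending
only on `δ`, such that for every metric space `X`, every point `P ∈ X` whose closed
`δ`-ball is complete, and every locally bounded function `f : X → (0, ∞)` with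
`f P ≥ 1`, there exists `Q ∈ B(P, δ)` with `f Q ≥ f P` and such that
`f Q' ≤ λ · f Q` for all `Q' ∈ B(Q, ε)`, where `ε = λ⁻¹ · (f Q)^{-1/2}`. -/
theorem stmt_11 (δ : ℝ) (hδ : 0 < δ) :
    ∃ lam : ℝ, 0 < lam ∧
      ∀ (X : Type*) [MetricSpace X] (P : X),
        IsComplete (Metric.closedBall P δ) →
        ∀ f : X → ℝ,
          (∀ x, 0 < f x) →
          (∀ x : X, ∃ B : ℝ, ∀ᶠ y in nhds x, |f y| ≤ B) →
          1 ≤ f P →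
          ∃ Q ∈ Metric.ball P δ, f P ≤ f Q ∧
            ∀ Q' ∈ Metric.ball Q (lam⁻¹ * f Q ^ (-(1 / 2) : ℝ)), f Q' ≤ lam * f Q := by
  set L : ℝ := max 4 (4 / δ) with hLdef
  have hL4 : (4 : ℝ) ≤ L := le_max_left _ _
  have hL0 : (0 : ℝ) < L := by linarith
  have hL1 : (1 : ℝ) < L := by linarith
  have hLδ : 2 / L ≤ δ / 2 := by
    have h1 : 4 / δ ≤ L := le_max_right _ _
    rw [div_le_div_iff₀ hL0 (by norm_num)]
    rw [div_le_iff₀ hδ] at h1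
    nlinarith
  set t : ℝ := L ^ (-(1 / 2) : ℝ) with htdef
  have ht0 : 0 < t := Real.rpow_pos_of_pos hL0 _
  have htt : t * t = L⁻¹ := by
    rw [htdef, ← Real.rpow_add hL0]
    norm_num [Real.rpow_neg_one]
  have ht2 : t ≤ 1 / 2 := by
    have hLi : L⁻¹ ≤ 1 / 4 := by
      rw [inv_le_comm₀ hL0 (by norm_num)]; linarith
    nlinarith
  refine ⟨L, hL0, ?_⟩
  intro X _ P hcomp f hfpos hlb hfP
  by_contra hcon
  push_neg at hcon
  -- the invariant maintained along the sequence
  set Inv : ℕ → X → Prop :=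
    fun n q => f P ≤ f q ∧ L ^ n ≤ f q ∧ dist P q ≤ 2 / L * (1 - t ^ n) with hInv
  have hInv0 : Inv 0 P := by
    refine ⟨le_refl _, by simpa using hfP, by simp⟩
  have hmem : ∀ n q, Inv n q → dist P q ≤ δ / 2 := by
    intro n q hq
    have htn : 0 ≤ t ^ n := pow_nonneg ht0.le n
    have h1 : 2 / L * (1 - t ^ n) ≤ 2 / L := by
      have : 0 < 2 / L := by positivity
      nlinarith
    calc dist P q ≤ 2 / L * (1 - t ^ n) := hq.2.2
    _ ≤ 2 / L := h1
    _ ≤ δ / 2 := hLδ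
  have key : ∀ n q, Inv n q → ∃ q', Inv (n + 1) q' ∧ dist q q' ≤ L⁻¹ * t ^ n := by
    intro n q hq
    have hqball : q ∈ Metric.ball P δ := by
      rw [Metric.mem_ball, dist_comm]
      calc dist P q ≤ δ / 2 := hmem n q hq
      _ < δ := by linarith
    obtain ⟨q', hq'ball, hq'f⟩ := hcon q hqball hq.1
    have hfq : 0 < f q := hfpos q
    have hdq : dist q' q < L⁻¹ * f q ^ (-(1 / 2) : ℝ) := Metric.mem_ball.mp hq'ball
    have hεle : L⁻¹ * f q ^ (-(1 / 2) : ℝ) ≤ L⁻¹ * t ^ n := by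
      have h1 : f q ^ (-(1 / 2) : ℝ) ≤ (L ^ n) ^ (-(1 / 2) : ℝ) :=
        Real.rpow_le_rpow_of_nonpos (by positivity) hq.2.1 (by norm_num)
      have h2 : (L ^ n) ^ (-(1 / 2) : ℝ) = t ^ n := by
        rw [← Real.rpow_natCast L n, ← Real.rpow_mul hL0.le, mul_comm,
          Real.rpow_mul hL0.le, Real.rpow_natCast]
      rw [h2] at h1
      have : (0:ℝ) < L⁻¹ := by positivity
      exact mul_le_mul_of_nonneg_left h1 this.le
    have hdist : dist q q' ≤ L⁻¹ * t ^ n := by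
      rw [dist_comm]; exact le_of_lt (lt_of_lt_of_le hdq hεle)
    refine ⟨q', ⟨?_, ?_, ?_⟩, hdist⟩
    · calc f P ≤ f q := hq.1
      _ ≤ L * f q := by nlinarith
      _ ≤ f q' := hq'f.le
    · calc L ^ (n + 1) = L * L ^ n := by ring
      _ ≤ L * f q := by nlinarith [hq.2.1]
      _ ≤ f q' := hq'f.le
    · have htn : 0 ≤ t ^ n := pow_nonneg ht0.le n
      calc dist P q' ≤ dist P q + dist q q' := dist_triangle _ _ _
      _ ≤ 2 / L * (1 - t ^ n) + L⁻¹ * t ^ n := add_le_add hq.2.2 hdist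
      _ ≤ 2 / L * (1 - t ^ (n + 1)) := by
          have : t ^ (n + 1) = t * t ^ n := by ring
          rw [this]
          have h2L : 2 / L = 2 * L⁻¹ := by ring
          nlinarith [mul_le_mul_of_nonneg_left ht2 htn]
    -- end key
  -- construct the sequence
  let u : ∀ n : ℕ, {q : X // Inv n q} := fun n =>
    Nat.rec ⟨P, hInv0⟩ (fun n p => ⟨(key n p.1 p.2).choose,
      (key n p.1 p.2).choose_spec.1⟩) n
  have hstep : ∀ n, dist ((u n).1) ((u (n + 1)).1) ≤ L⁻¹ * t ^ n := fun n =>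
    (key n (u n).1 (u n).2).choose_spec.2
  have hcauchy : CauchySeq (fun n => (u n).1) :=
    cauchySeq_of_le_geometric t L⁻¹ (by linarith) hstep
  have humem : ∀ n, (u n).1 ∈ Metric.closedBall P δ := by
    intro n
    rw [Metric.mem_closedBall, dist_comm]
    calc dist P (u n).1 ≤ δ / 2 := hmem n (u n).1 (u n).2
    _ ≤ δ := by linarith
  obtain ⟨x, _, hx⟩ := cauchySeq_tendsto_of_isComplete hcomp humem hcauchy
  obtain ⟨B, hB⟩ := hlb x
  have hev : ∀ᶠ n in Filter.atTop, |f ((u n).1)| ≤ B := hx.eventually hB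
  obtain ⟨N, hN⟩ := Filter.eventually_atTop.mp hev
  obtain ⟨m, hm⟩ := pow_unbounded_of_one_lt B hL1
  set n := max m N with hn
  have h1 : L ^ m ≤ L ^ n := pow_le_pow_right₀ hL1.le (le_max_left _ _)
  have h2 : L ^ n ≤ f ((u n).1) := (u n).2.2.1
  have h3 : |f ((u n).1)| ≤ B := hN n (le_max_right _ _)
  have h4 : f ((u n).1) ≤ B := (abs_le.mp h3).2
  linarith
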